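/- Among all decision rules d with P(d(X,Z)=1 | Z=a) = q_a and P(d(X,Z)=1 | Z=b) = q_b fixed, the rule that sets d=1 on the points of each group with the highest conditional probability p(X,Z), i.e. a per-group threshold rule d*(x,z) = 1{p(x,z) ≥ t_z} with t_z chosen as the (1 − q_z)-quantile of p within group z, maximizes u(d, 1/2) = E[d(X,Z)(p(X,Z) − 1/2)]. -/

import Mathlib

open MeasureTheory

/-- Among all decision rules with fixed group-wise positive
rates `q z = P(d(X,Z)=1 | Z=z)` (groups `z : Bool`, `true = a`, `false = b`),
the per-group threshold rule `d*(x,z) = 1{p(x,z) ≥ t z}`, with `t z` the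
`(1 − q z)`-quantile of `p(X,Z)` within group `z` (i.e.
`P(p(X,Z) ≥ t z | Z=z) = q z`), maximizes the immediate utility
`u(d,1/2) = E[d(X,Z)(p(X,Z) − 1/2)]`. -/
theorem per_group_threshold_optimal
    {Ω 𝒳 : Type*} [MeasurableSpace Ω] [MeasurableSpace 𝒳]
    (μ : Measure Ω) [IsProbabilityMeasure μ]
    (X : Ω → 𝒳) (Z : Ω → Bool)
    (hX : Measurable X) (hZ : Measurable Z)
    (p : 𝒳 → Bool → ℝ) (hp : ∀ z, Measurable fun x => p x z)
    (hp01 : ∀ x z, p x z ∈ Set.Icc (0 : ℝ) 1)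
    (hZpos : ∀ z, 0 < (μ {ω | Z ω = z}).toReal)
    -- within each group, p(X,Z) has a continuous (atomless) distribution
    (hatomless : ∀ z r, μ ({ω | p (X ω) (Z ω) = r} ∩ {ω | Z ω = z}) = 0)
    (q t : Bool → ℝ) (hq : ∀ z, q z ∈ Set.Icc (0 : ℝ) 1)
    -- t z is the (1 - q z)-quantile of p within group z
    (ht : ∀ z, (μ ({ω | t z ≤ p (X ω) (Z ω)} ∩ {ω | Z ω = z})).toReal
        / (μ {ω | Z ω = z}).toReal = q z)
    (dstar : 𝒳 → Bool → ℝ)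
    (hdstar : ∀ x z, dstar x z = if t z ≤ p x z then 1 else 0) :
    ∀ d : 𝒳 → Bool → ℝ,
      (∀ x z, d x z = 0 ∨ d x z = 1) →
      (∀ z, Measurable fun x => d x z) →
      (∀ z, (μ ({ω | d (X ω) (Z ω) = 1} ∩ {ω | Z ω = z})).toReal
          / (μ {ω | Z ω = z}).toReal = q z) →
      ∫ ω, d (X ω) (Z ω) * (p (X ω) (Z ω) - 1 / 2) ∂μ
        ≤ ∫ ω, dstar (X ω) (Z ω) * (p (X ω) (Z ω) - 1 / 2) ∂μ := by
  intro d hd01 hdm hdq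
  classical
  -- abbreviations
  set P : Ω → ℝ := fun ω => p (X ω) (Z ω) with hPdef
  set f : Ω → ℝ := fun ω => dstar (X ω) (Z ω) with hfdef
  set g : Ω → ℝ := fun ω => d (X ω) (Z ω) with hgdef
  have hPm : Measurable P := by
    have hE : P = fun ω => if Z ω = true then p (X ω) true else p (X ω) false := by
      funext ω; cases hz : Z ω <;> simp [hPdef, hz]
    rw [hE]
    exact Measurable.ite (hZ (measurableSet_singleton true)) ((hp true).comp hX)
      ((hp false).comp hX)
  have hgm : Measurable g := by
    have hE : g = fun ω => if Z ω = true then d (X ω) true else d (X ω) false := by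
      funext ω; cases hz : Z ω <;> simp [hgdef, hz]
    rw [hE]
    exact Measurable.ite (hZ (measurableSet_singleton true)) ((hdm true).comp hX)
      ((hdm false).comp hX)
  have htZ : Measurable fun ω => t (Z ω) := (measurable_of_countable t).comp hZ
  have hfm : Measurable f := by
    have hE : f = fun ω => if t (Z ω) ≤ P ω then (1 : ℝ) else 0 := by
      funext ω; simp [hfdef, hdstar, hPdef]
    rw [hE]
    exact Measurable.ite (measurableSet_le htZ hPm) measurable_const measurable_const
  have hf01 : ∀ ω, f ω = 0 ∨ f ω = 1 := by
    intro ω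
    simp only [hfdef, hdstar]
    split <;> simp
  have hg01 : ∀ ω, g ω = 0 ∨ g ω = 1 := fun ω => hd01 (X ω) (Z ω)
  have hP01 : ∀ ω, 0 ≤ P ω ∧ P ω ≤ 1 := fun ω => hp01 (X ω) (Z ω)
  -- boundedness gives integrability
  have hbdd : ∀ (h : Ω → ℝ), Measurable h → ∀ C : ℝ, (∀ ω, |h ω| ≤ C) → Integrable h μ := by
    intro h hm C hC
    exact (integrable_const C).mono' hm.aestronglyMeasurable
      (Filter.Eventually.of_forall fun ω => by simpa using hC ω)
  have habs : ∀ (h : Ω → ℝ), (∀ ω, h ω = 0 ∨ h ω = 1) → Measurable h → ∀ c : ℝ,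
      Integrable (fun ω => h ω * (P ω - c)) μ := by
    intro h h01 hm c
    refine hbdd _ (hm.mul (hPm.sub measurable_const)) (1 + |c|) fun ω => ?_
    rw [abs_mul]
    have h1 : |h ω| ≤ 1 := by rcases h01 ω with h' | h' <;> simp [h']
    have h2 : |P ω - c| ≤ 1 + |c| := by
      obtain ⟨hp0, hp1⟩ := hP01 ω
      rcases abs_cases (P ω - c) with ⟨e, _⟩ | ⟨e, _⟩ <;>
        rcases abs_cases c with ⟨e', _⟩ | ⟨e', _⟩ <;> linarith
    calc |h ω| * |P ω - c| ≤ 1 * (1 + |c|) :=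
          mul_le_mul h1 h2 (abs_nonneg _) one_pos.le
      _ = 1 + |c| := one_mul _
  have hint1 : ∀ (h : Ω → ℝ), (∀ ω, h ω = 0 ∨ h ω = 1) → Measurable h → Integrable h μ := by
    intro h h01 hm
    refine hbdd _ hm 1 fun ω => ?_
    rcases h01 ω with h' | h' <;> simp [h']
  have hfint := hint1 f hf01 hfm
  have hgint := hint1 g hg01 hgm
  -- the key per-group inequality
  have key : ∀ z : Bool, ∫ ω in {ω | Z ω = z}, g ω * (P ω - 1 / 2) ∂μ
      ≤ ∫ ω in {ω | Z ω = z}, f ω * (P ω - 1 / 2) ∂μ := by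
    intro z
    have hS : MeasurableSet {ω | Z ω = z} := hZ (measurableSet_singleton z)
    have hTm : MeasurableSet {ω | t z ≤ P ω} := measurableSet_le measurable_const hPm
    -- integral of f over the group equals the measure of the threshold set
    have hfS : ∫ ω in {ω | Z ω = z}, f ω ∂μ
        = (μ ({ω | t z ≤ P ω} ∩ {ω | Z ω = z})).toReal := by
      have e1 : ∫ ω in {ω | Z ω = z}, f ω ∂μ
          = ∫ ω in {ω | Z ω = z}, Set.indicator {ω | t z ≤ P ω} (fun _ => (1 : ℝ)) ω ∂μ := by
        refine setIntegral_congr_fun hS fun ω hω => ?_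
        have hz : Z ω = z := hω
        simp [hfdef, hdstar, hz, hPdef, Set.indicator_apply]
      rw [e1, setIntegral_indicator hTm]
      simp [Set.inter_comm]
      rfl
    -- integral of g over the group equals the measure of {g = 1} in the group
    have hgS : ∫ ω in {ω | Z ω = z}, g ω ∂μ
        = (μ ({ω | g ω = 1} ∩ {ω | Z ω = z})).toReal := by
      have hGm : MeasurableSet {ω | g ω = 1} := hgm (measurableSet_singleton 1)
      have e1 : ∫ ω in {ω | Z ω = z}, g ω ∂μ
          = ∫ ω in {ω | Z ω = z}, Set.indicator {ω | g ω = 1} (fun _ => (1 : ℝ)) ω ∂μ := by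
        refine setIntegral_congr_fun hS fun ω _ => ?_
        rcases hg01 ω with h' | h' <;> simp [Set.indicator_apply, h']
      rw [e1, setIntegral_indicator hGm]
      simp [Set.inter_comm]
      rfl
    -- equal rates give equal integrals
    have hfg : ∫ ω in {ω | Z ω = z}, f ω ∂μ = ∫ ω in {ω | Z ω = z}, g ω ∂μ := by
      rw [hfS, hgS]
      have h1 := ht z
      have h2 := hdq z
      have hc := hZpos z
      have e1 : (μ ({ω | t z ≤ P ω} ∩ {ω | Z ω = z})).toReal
          = q z * (μ {ω | Z ω = z}).toReal := (div_eq_iff hc.ne').mp h1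
      have e2 : (μ ({ω | g ω = 1} ∩ {ω | Z ω = z})).toReal
          = q z * (μ {ω | Z ω = z}).toReal := (div_eq_iff hc.ne').mp h2
      rw [e1, e2]
    -- pointwise decomposition
    have edec : ∀ ω, f ω * (P ω - 1 / 2) =
        g ω * (P ω - 1 / 2) + (f ω - g ω) * (P ω - t z) + (f ω - g ω) * (t z - 1 / 2) := by
      intro ω; ring
    have hintA : Integrable (fun ω => g ω * (P ω - 1 / 2)) (μ.restrict {ω | Z ω = z}) :=
      (habs g hg01 hgm (1 / 2)).restrict
    have hintB : Integrable (fun ω => (f ω - g ω) * (P ω - t z)) (μ.restrict {ω | Z ω = z}) := by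
      have : (fun ω => (f ω - g ω) * (P ω - t z))
          = fun ω => f ω * (P ω - t z) - g ω * (P ω - t z) := by funext ω; ring
      rw [this]
      exact ((habs f hf01 hfm (t z)).sub (habs g hg01 hgm (t z))).restrict
    have hintC : Integrable (fun ω => (f ω - g ω) * (t z - 1 / 2)) (μ.restrict {ω | Z ω = z}) :=
      ((hfint.sub hgint).mul_const _).restrict
    have emain : ∫ ω in {ω | Z ω = z}, f ω * (P ω - 1 / 2) ∂μ
        = ∫ ω in {ω | Z ω = z}, g ω * (P ω - 1 / 2) ∂μ
          + ∫ ω in {ω | Z ω = z}, (f ω - g ω) * (P ω - t z) ∂μ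
          + ∫ ω in {ω | Z ω = z}, (f ω - g ω) * (t z - 1 / 2) ∂μ := by
      calc ∫ ω in {ω | Z ω = z}, f ω * (P ω - 1 / 2) ∂μ
          = ∫ ω in {ω | Z ω = z}, (g ω * (P ω - 1 / 2) + (f ω - g ω) * (P ω - t z)
              + (f ω - g ω) * (t z - 1 / 2)) ∂μ :=
            setIntegral_congr_fun hS fun ω _ => edec ω
        _ = _ := by
            have hintAB : Integrable
                (fun ω => g ω * (P ω - 1 / 2) + (f ω - g ω) * (P ω - t z))
                (μ.restrict {ω | Z ω = z}) := hintA.add hintB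
            rw [integral_add hintAB hintC, integral_add hintA hintB]
    -- the constant-threshold term vanishes
    have hC0 : ∫ ω in {ω | Z ω = z}, (f ω - g ω) * (t z - 1 / 2) ∂μ = 0 := by
      rw [integral_mul_const, integral_sub hfint.restrict hgint.restrict, hfg]
      ring
    -- the main term is nonnegative
    have hB0 : 0 ≤ ∫ ω in {ω | Z ω = z}, (f ω - g ω) * (P ω - t z) ∂μ := by
      refine setIntegral_nonneg hS fun ω hω => ?_
      have hz : Z ω = z := hω
      have hfω : f ω = if t z ≤ P ω then (1 : ℝ) else 0 := by
        simp [hfdef, hdstar, hz, hPdef]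
      rcases hg01 ω with hgω | hgω
      · by_cases hle : t z ≤ P ω
        · rw [hfω, if_pos hle, hgω]
          nlinarith
        · rw [hfω, if_neg hle, hgω]
          nlinarith
      · by_cases hle : t z ≤ P ω
        · rw [hfω, if_pos hle, hgω]
          nlinarith
        · rw [hfω, if_neg hle, hgω]
          push_neg at hle
          nlinarith
    rw [emain, hC0, add_zero]
    linarith
  -- split the total integral over the two groups
  have hsplit : ∀ h : Ω → ℝ, Integrable h μ → ∫ ω, h ω ∂μ
      = ∫ ω in {ω | Z ω = true}, h ω ∂μ + ∫ ω in {ω | Z ω = false}, h ω ∂μ := by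
    intro h hint
    have hc : {ω | Z ω = false} = {ω | Z ω = true}ᶜ := by
      ext ω; simp [Bool.not_eq_true]
    rw [hc]
    exact (integral_add_compl (hZ (measurableSet_singleton true)) hint).symm
  have hfI : Integrable (fun ω => f ω * (P ω - 1 / 2)) μ := habs f hf01 hfm (1 / 2)
  have hgI : Integrable (fun ω => g ω * (P ω - 1 / 2)) μ := habs g hg01 hgm (1 / 2)
  calc ∫ ω, g ω * (P ω - 1 / 2) ∂μ
      = ∫ ω in {ω | Z ω = true}, g ω * (P ω - 1 / 2) ∂μ
        + ∫ ω in {ω | Z ω = false}, g ω * (P ω - 1 / 2) ∂μ := hsplit _ hgI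
    _ ≤ ∫ ω in {ω | Z ω = true}, f ω * (P ω - 1 / 2) ∂μ
        + ∫ ω in {ω | Z ω = false}, f ω * (P ω - 1 / 2) ∂μ := add_le_add (key true) (key false)
    _ = ∫ ω, f ω * (P ω - 1 / 2) ∂μ := (hsplit _ hfI).symm
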